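/- The integral ∫_{arsinh d}^{(3/2)·log d} d / √((sinh x)² − d²) dx tends to π/2 as d → +∞ (limit along the filter atTop on the reals, the integral being the Lebesgue integral over the interval (arsinh d, (3/2)·log d]). -/

import Mathlib

open Real Filter MeasureTheory

private lemma cat_sqrt_atTop : Tendsto Real.sqrt atTop atTop :=
  tendsto_atTop_atTop.2 fun b => ⟨b ^ 2, fun a ha => by
    calc b ≤ |b| := le_abs_self b
    _ = Real.sqrt (b ^ 2) := (Real.sqrt_sq_eq_abs b).symm
    _ ≤ Real.sqrt a := Real.sqrt_le_sqrt ha⟩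

private lemma cat_exp_L {d : ℝ} (hd : 0 < d) :
    Real.exp ((3/2) * Real.log d) = d * Real.sqrt d := by
  rw [mul_comm, ← Real.rpow_def_of_pos hd]
  have : (3/2 : ℝ) = 1 + 1/2 := by norm_num
  rw [this, Real.rpow_add hd, Real.rpow_one, ← Real.sqrt_eq_rpow]

private lemma cat_sqrt_ge {d : ℝ} (hd : 16 ≤ d) : 4 ≤ Real.sqrt d := by
  rw [Real.le_sqrt (by norm_num) (by linarith)]; nlinarith

private lemma cat_sinh_L_ge {d : ℝ} (hd : 16 ≤ d) :
    d * Real.sqrt d / 4 ≤ Real.sinh ((3/2) * Real.log d) := by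
  have hd0 : (0 : ℝ) < d := by linarith
  have hL0 : 0 ≤ (3/2) * Real.log d := by
    have : (0:ℝ) ≤ Real.log d := Real.log_nonneg (by linarith)
    positivity
  have h1 : Real.exp (-((3/2) * Real.log d)) ≤ 1 := by
    rw [Real.exp_le_one_iff]; linarith
  have h2 : 2 ≤ d * Real.sqrt d := by
    have := cat_sqrt_ge hd
    nlinarith
  rw [Real.sinh_eq, cat_exp_L hd0]
  linarith

private lemma cat_ratio_tendsto :
    Tendsto (fun d : ℝ => d / Real.sinh ((3/2) * Real.log d)) atTop (nhds 0) := by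
  have h4 : Tendsto (fun d : ℝ => 4 / Real.sqrt d) atTop (nhds 0) :=
    tendsto_const_nhds.div_atTop cat_sqrt_atTop
  apply tendsto_of_tendsto_of_tendsto_of_le_of_le' tendsto_const_nhds h4
  · filter_upwards [eventually_ge_atTop (16:ℝ)] with d hd
    have hd0 : (0:ℝ) < d := by linarith
    have hs : 0 < Real.sinh ((3/2) * Real.log d) := by
      have := cat_sinh_L_ge hd
      have := cat_sqrt_ge hd
      nlinarith
    positivity
  · filter_upwards [eventually_ge_atTop (16:ℝ)] with d hd
    have hd0 : (0:ℝ) < d := by linarith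
    have hsq := cat_sqrt_ge hd
    have hs0 : 0 < d * Real.sqrt d / 4 := by positivity
    have hs := cat_sinh_L_ge hd
    calc d / Real.sinh ((3/2) * Real.log d) ≤ d / (d * Real.sqrt d / 4) := by
          exact div_le_div_of_nonneg_left hd0.le hs0 hs
      _ = 4 / Real.sqrt d := by
          field_simp

private lemma cat_one_tendsto :
    Tendsto (fun d : ℝ => d / Real.sqrt (1 + d ^ 2)) atTop (nhds 1) := by
  have h1 : Tendsto (fun d : ℝ => (d ^ 2)⁻¹) atTop (nhds 0) :=
    (tendsto_pow_atTop two_ne_zero).inv_tendsto_atTop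
  have h2 : ContinuousAt (fun t : ℝ => 1 / Real.sqrt (t + 1)) 0 := by
    apply ContinuousAt.div continuousAt_const
    · exact (Real.continuous_sqrt.comp (continuous_add_right 1)).continuousAt
    · simp
  have h3 := h2.tendsto.comp h1
  simp only [Function.comp_def] at h3
  norm_num at h3
  apply h3.congr'
  filter_upwards [eventually_gt_atTop (0:ℝ)] with d hd
  have hd2 : (0:ℝ) < d ^ 2 := by positivity
  show (Real.sqrt ((d ^ 2)⁻¹ + 1))⁻¹ = d / Real.sqrt (1 + d ^ 2)
  rw [show (d ^ 2)⁻¹ + 1 = (1 + d ^ 2) / d ^ 2 by field_simp,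
    Real.sqrt_div (by positivity) (d ^ 2), Real.sqrt_sq hd.le, ← one_div, one_div_div]


private lemma cat_key {d : ℝ} (hd : 16 ≤ d) :
    (d / Real.sqrt (1 + d ^ 2)) * Real.arccos (d / Real.sinh ((3/2) * Real.log d)) ≤
      (∫ x in Set.Ioc (Real.arsinh d) ((3/2) * Real.log d),
          d / Real.sqrt ((Real.sinh x) ^ 2 - d ^ 2)) ∧
    (∫ x in Set.Ioc (Real.arsinh d) ((3/2) * Real.log d),
          d / Real.sqrt ((Real.sinh x) ^ 2 - d ^ 2)) ≤
      Real.arccos (d / Real.sinh ((3/2) * Real.log d)) := by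
  have hd0 : (0:ℝ) < d := by linarith
  set a := Real.arsinh d with ha_def
  set L := (3/2) * Real.log d with hL_def
  have hsq4 := cat_sqrt_ge hd
  have hdL : d < Real.sinh L := by
    have h1 : Real.exp (-L) ≤ 1 := by
      rw [Real.exp_le_one_iff]
      have : (0:ℝ) ≤ Real.log d := Real.log_nonneg (by linarith)
      rw [hL_def]; nlinarith
    have h2 : 4 * d ≤ Real.sqrt d * d := mul_le_mul_of_nonneg_right hsq4 hd0.le
    rw [Real.sinh_eq, cat_exp_L hd0]
    nlinarith
  have haL : a < L := by
    rw [← Real.arsinh_sinh L, ha_def]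
    exact Real.arsinh_strictMono hdL
  -- basic facts on the interval
  have hs_Ioc : ∀ x ∈ Set.Ioc a L, d < Real.sinh x := by
    intro x hx
    calc d = Real.sinh a := (Real.sinh_arsinh d).symm
      _ < Real.sinh x := Real.sinh_lt_sinh.mpr hx.1
  have hs_Icc : ∀ x ∈ Set.Icc a L, d ≤ Real.sinh x := by
    intro x hx
    calc d = Real.sinh a := (Real.sinh_arsinh d).symm
      _ ≤ Real.sinh x := Real.sinh_le_sinh.mpr hx.1
  set G := fun x : ℝ => Real.arccos (d / Real.sinh x) with hG_def
  set g := fun x : ℝ => d * Real.cosh x / (Real.sinh x * Real.sqrt (Real.sinh x ^ 2 - d ^ 2))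
    with hg_def
  set f := fun x : ℝ => d / Real.sqrt (Real.sinh x ^ 2 - d ^ 2) with hf_def
  have hderiv : ∀ x ∈ Set.Ioo a L, HasDerivAt G (g x) x := by
    intro x hx
    have hsx : d < Real.sinh x := hs_Ioc x ⟨hx.1, hx.2.le⟩
    have hs0 : 0 < Real.sinh x := lt_trans hd0 hsx
    have hsd : 0 < Real.sinh x ^ 2 - d ^ 2 := by nlinarith
    have hp0 : 0 < Real.sqrt (Real.sinh x ^ 2 - d ^ 2) := Real.sqrt_pos.mpr hsd
    have hinner : HasDerivAt (fun y : ℝ => d / Real.sinh y)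
        ((0 * Real.sinh x - d * Real.cosh x) / Real.sinh x ^ 2) x :=
      (hasDerivAt_const x d).div (Real.hasDerivAt_sinh x) (ne_of_gt hs0)
    have hy1 : d / Real.sinh x ≠ -1 := by
      have : 0 < d / Real.sinh x := div_pos hd0 hs0
      linarith
    have hy2 : d / Real.sinh x ≠ 1 := ne_of_lt ((div_lt_one hs0).mpr hsx)
    have hcomp := (Real.hasDerivAt_arccos hy1 hy2).comp x hinner
    have hsq : Real.sqrt (1 - (d / Real.sinh x) ^ 2)
        = Real.sqrt (Real.sinh x ^ 2 - d ^ 2) / Real.sinh x := by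
      rw [show 1 - (d / Real.sinh x) ^ 2 = (Real.sinh x ^ 2 - d ^ 2) / Real.sinh x ^ 2 by
        field_simp, Real.sqrt_div hsd.le, Real.sqrt_sq hs0.le]
    have heq : d * Real.cosh x / (Real.sinh x * Real.sqrt (Real.sinh x ^ 2 - d ^ 2))
        = -(1 / Real.sqrt (1 - (d / Real.sinh x) ^ 2))
            * ((0 * Real.sinh x - d * Real.cosh x) / Real.sinh x ^ 2) := by
      rw [hsq]
      generalize Real.sqrt (Real.sinh x ^ 2 - d ^ 2) = p at hp0 ⊢
      field_simp
      ring
    rw [hg_def]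
    simpa [heq, hG_def, Function.comp_def] using hcomp
  have hcontG : ContinuousOn G (Set.Icc a L) := by
    apply Real.continuous_arccos.comp_continuousOn
    apply ContinuousOn.div continuousOn_const Real.continuous_sinh.continuousOn
    intro x hx
    exact ne_of_gt (lt_of_lt_of_le hd0 (hs_Icc x hx))
  have hgpos : ∀ x ∈ Set.Ioo a L, 0 ≤ g x := by
    intro x hx
    have hs0 : 0 < Real.sinh x := lt_trans hd0 (hs_Ioc x ⟨hx.1, hx.2.le⟩)
    have := Real.cosh_pos x
    positivity
  have hg_int : IntegrableOn g (Set.Ioc a L) volume :=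
    intervalIntegral.integrableOn_deriv_of_nonneg hcontG hderiv hgpos
  have hval : (∫ x in Set.Ioc a L, g x) = Real.arccos (d / Real.sinh L) := by
    have h1 := intervalIntegral.integral_eq_sub_of_hasDeriv_right_of_le haL.le hcontG
      (fun x hx => (hderiv x hx).hasDerivWithinAt)
      ((intervalIntegrable_iff_integrableOn_Ioc_of_le haL.le).mpr hg_int)
    rw [intervalIntegral.integral_of_le haL.le] at h1
    rw [h1, hG_def]
    simp only [ha_def, Real.sinh_arsinh, div_self (ne_of_gt hd0), Real.arccos_one, sub_zero]
  -- pointwise bounds on Ioc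
  have hfg : ∀ x ∈ Set.Ioc a L, f x ≤ g x := by
    intro x hx
    have hsx : d < Real.sinh x := hs_Ioc x hx
    have hs0 : 0 < Real.sinh x := lt_trans hd0 hsx
    have hsd : 0 < Real.sinh x ^ 2 - d ^ 2 := by nlinarith
    have hp0 : 0 < Real.sqrt (Real.sinh x ^ 2 - d ^ 2) := Real.sqrt_pos.mpr hsd
    have hsc : Real.sinh x ≤ Real.cosh x := by
      nlinarith [Real.cosh_sq x, Real.cosh_pos x]
    rw [hf_def, hg_def, div_le_div_iff₀ hp0 (by positivity)]
    nlinarith [mul_pos hd0 hp0]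
  have hcg : ∀ x ∈ Set.Ioc a L, (d / Real.sqrt (1 + d ^ 2)) * g x ≤ f x := by
    intro x hx
    have hsx : d < Real.sinh x := hs_Ioc x hx
    have hs0 : 0 < Real.sinh x := lt_trans hd0 hsx
    have hsd : 0 < Real.sinh x ^ 2 - d ^ 2 := by nlinarith
    have hp0 : 0 < Real.sqrt (Real.sinh x ^ 2 - d ^ 2) := Real.sqrt_pos.mpr hsd
    have hq0 : 0 < Real.sqrt (1 + d ^ 2) := by positivity
    have hkey : d * Real.cosh x ≤ Real.sqrt (1 + d ^ 2) * Real.sinh x := by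
      have h1 : Real.cosh x = Real.sqrt (1 + Real.sinh x ^ 2) := by
        rw [← Real.cosh_sq', Real.sqrt_sq (Real.cosh_pos x).le]
      rw [h1, show d * Real.sqrt (1 + Real.sinh x ^ 2)
          = Real.sqrt (d ^ 2 * (1 + Real.sinh x ^ 2)) by
        rw [Real.sqrt_mul (by positivity), Real.sqrt_sq hd0.le],
        show Real.sqrt (1 + d ^ 2) * Real.sinh x
          = Real.sqrt ((1 + d ^ 2) * Real.sinh x ^ 2) by
        rw [Real.sqrt_mul (by positivity), Real.sqrt_sq hs0.le]]
      apply Real.sqrt_le_sqrt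
      nlinarith
    rw [hf_def, hg_def, div_mul_div_comm, div_le_div_iff₀ (by positivity) hp0]
    have h2 : d * (d * Real.cosh x) * Real.sqrt (Real.sinh x ^ 2 - d ^ 2)
        ≤ d * (Real.sqrt (1 + d ^ 2) * Real.sinh x) * Real.sqrt (Real.sinh x ^ 2 - d ^ 2) := by
      apply mul_le_mul_of_nonneg_right _ hp0.le
      exact mul_le_mul_of_nonneg_left hkey hd0.le
    calc d * (d * Real.cosh x) * Real.sqrt (Real.sinh x ^ 2 - d ^ 2)
        ≤ d * (Real.sqrt (1 + d ^ 2) * Real.sinh x) * Real.sqrt (Real.sinh x ^ 2 - d ^ 2) := h2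
      _ = d * (Real.sqrt (1 + d ^ 2) * (Real.sinh x * Real.sqrt (Real.sinh x ^ 2 - d ^ 2))) := by
          ring
  -- integrability of f
  have hf_cont : ContinuousOn f (Set.Ioc a L) := by
    apply ContinuousOn.div continuousOn_const
    · exact ((Real.continuous_sinh.pow 2).sub continuous_const).sqrt.continuousOn
    · intro x hx
      have hsx : d < Real.sinh x := hs_Ioc x hx
      have hsd : 0 < Real.sinh x ^ 2 - d ^ 2 := by nlinarith
      exact ne_of_gt (Real.sqrt_pos.mpr hsd)
  have hf_int : IntegrableOn f (Set.Ioc a L) volume := by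
    apply Integrable.mono' hg_int (hf_cont.aestronglyMeasurable measurableSet_Ioc)
    rw [ae_restrict_iff' measurableSet_Ioc]
    filter_upwards with x hx
    have hfx0 : 0 ≤ f x := by rw [hf_def]; positivity
    rw [Real.norm_eq_abs, abs_of_nonneg hfx0]
    exact hfg x hx
  constructor
  · have h1 : (∫ x in Set.Ioc a L, (d / Real.sqrt (1 + d ^ 2)) * g x)
        ≤ ∫ x in Set.Ioc a L, f x :=
      setIntegral_mono_on ((hg_int.const_mul _)) hf_int measurableSet_Ioc hcg
    rwa [MeasureTheory.integral_const_mul, hval] at h1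
  · have h1 : (∫ x in Set.Ioc a L, f x) ≤ ∫ x in Set.Ioc a L, g x :=
      setIntegral_mono_on hf_int hg_int measurableSet_Ioc hfg
    rwa [hval] at h1

theorem catenoid_half_height_tendsto :
    Tendsto (fun d : ℝ =>
        ∫ x in Set.Ioc (Real.arsinh d) ((3/2) * Real.log d),
          d / Real.sqrt ((Real.sinh x) ^ 2 - d ^ 2))
      atTop (nhds (Real.pi / 2)) := by
  have h_arccos : Tendsto (fun d : ℝ => Real.arccos (d / Real.sinh ((3/2) * Real.log d)))
      atTop (nhds (Real.pi / 2)) := by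
    have := (Real.continuous_arccos.tendsto 0).comp cat_ratio_tendsto
    simpa [Function.comp_def, Real.arccos_zero] using this
  have h_low : Tendsto (fun d : ℝ => (d / Real.sqrt (1 + d ^ 2))
        * Real.arccos (d / Real.sinh ((3/2) * Real.log d)))
      atTop (nhds (Real.pi / 2)) := by
    have := cat_one_tendsto.mul h_arccos
    simpa using this
  apply tendsto_of_tendsto_of_tendsto_of_le_of_le' h_low h_arccos
  · filter_upwards [eventually_ge_atTop (16:ℝ)] with d hd
    exact (cat_key hd).1
  · filter_upwards [eventually_ge_atTop (16:ℝ)] with d hd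
    exact (cat_key hd).2
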